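/- Let (V, ⟨·,·⟩) be a 2g-dimensional symplectic 𝔽₂-vector space with symplectic basis a₁,b₁,…,a_g,b_g, and q a quadratic form refining ⟨·,·⟩. Define Arf(q) = Σᵢ q(aᵢ)q(bᵢ) ∈ 𝔽₂. Then Arf(q) is independent of the choice of symplectic basis. -/

import Mathlib

private def χ (x : ZMod 2) : ℤ := (-1) ^ x.val

private lemma χ_add (x y : ZMod 2) : χ (x + y) = χ x * χ y := by revert x y; decide

private lemma χ_zero : χ 0 = 1 := by decide

private lemma χ_inj {a b : ZMod 2} (h : χ a = χ b) : a = b := by revert h; revert a b; decide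

private lemma key_factor (a b : ZMod 2) :
    ∑ p : ZMod 2 × ZMod 2, χ (p.1 * a + p.2 * b + p.1 * p.2) = 2 * χ (a * b) := by revert a b; decide

private lemma χ_sum {α : Type*} (s : Finset α) (f : α → ZMod 2) :
    χ (∑ i ∈ s, f i) = ∏ i ∈ s, χ (f i) := by
  induction s using Finset.cons_induction with
  | empty => simpa using χ_zero
  | cons a s ha ih => rw [Finset.sum_cons, Finset.prod_cons, χ_add, ih]

private def E (g : ℕ) : (Fin g → ZMod 2 × ZMod 2) ≃ ((Fin g ⊕ Fin g) → ZMod 2) where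
  toFun d := Sum.elim (fun i => (d i).1) (fun i => (d i).2)
  invFun c i := (c (Sum.inl i), c (Sum.inr i))
  left_inv d := by funext i; simp
  right_inv c := by funext i; cases i <;> simp

private lemma gauss (V : Type*) [AddCommGroup V] [Module (ZMod 2) V]
    (g : ℕ)
    (B : V →ₗ[ZMod 2] V →ₗ[ZMod 2] ZMod 2)
    (halt : ∀ x, B x x = 0)
    (q : V → ZMod 2)
    (hq : ∀ x y, q (x + y) = q x + q y + B x y)
    (e : Module.Basis (Fin g ⊕ Fin g) (ZMod 2) V)
    (he : ∀ i j : Fin g,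
      B (e (Sum.inl i)) (e (Sum.inr j)) = (if i = j then 1 else 0) ∧
      B (e (Sum.inl i)) (e (Sum.inl j)) = 0 ∧
      B (e (Sum.inr i)) (e (Sum.inr j)) = 0) :
    ∑ c : (Fin g ⊕ Fin g) → ZMod 2, χ (q (∑ i, c i • e i)) =
      2 ^ g * χ (∑ i : Fin g, q (e (Sum.inl i)) * q (e (Sum.inr i))) := by
  classical
  have q0 : q 0 = 0 := by
    have h := hq 0 0
    rw [add_zero, halt, add_zero, CharTwo.add_self_eq_zero] at h
    exact h
  have hsymm : ∀ x y, B x y = B y x := by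
    intro x y
    have h := halt (x + y)
    simp only [map_add, LinearMap.add_apply, halt, zero_add, add_zero] at h
    linear_combination h - CharTwo.add_self_eq_zero (B y x)
  have q_smul : ∀ (c : ZMod 2) (v : V), q (c • v) = c * q v := by
    intro c v
    fin_cases c
    · change q ((0 : ZMod 2) • v) = 0 * q v; simpa using q0
    · change q ((1 : ZMod 2) • v) = 1 * q v; simp
  -- the per-pair vector
  set v : ((Fin g ⊕ Fin g) → ZMod 2) → Fin g → V :=
    fun c i => c (Sum.inl i) • e (Sum.inl i) + c (Sum.inr i) • e (Sum.inr i) with hv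
  have q_sum : ∀ (s : Finset (Fin g)) (f : Fin g → V),
      (∀ i ∈ s, ∀ j ∈ s, i ≠ j → B (f i) (f j) = 0) →
      q (∑ i ∈ s, f i) = ∑ i ∈ s, q (f i) := by
    intro s
    induction s using Finset.cons_induction with
    | empty => intro f _; simpa using q0
    | cons a s ha ih =>
      intro f hf
      rw [Finset.sum_cons, Finset.sum_cons, hq,
        ih f (fun i hi j hj hij => hf i (by simp [hi]) j (by simp [hj]) hij)]
      have hz : B (f a) (∑ i ∈ s, f i) = 0 := by
        rw [map_sum]
        refine Finset.sum_eq_zero fun j hj => ?_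
        exact hf a (by simp) j (by simp [hj]) (by rintro rfl; exact ha hj)
      rw [hz, add_zero]
  have horth : ∀ (c : (Fin g ⊕ Fin g) → ZMod 2) (i j : Fin g), i ≠ j →
      B (v c i) (v c j) = 0 := by
    intro c i j hij
    obtain ⟨h1, h2, _⟩ := he i j
    obtain ⟨h1', _, h3'⟩ := he j i
    have hba : B (e (Sum.inr i)) (e (Sum.inl j)) = 0 := by
      rw [hsymm, h1', if_neg (Ne.symm hij)]
    have hbb : B (e (Sum.inr i)) (e (Sum.inr j)) = 0 := by
      rw [hsymm, h3']
    simp [hv, map_add, map_smul, h1, h2, hba, hbb, if_neg hij]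
  have qv : ∀ (c : (Fin g ⊕ Fin g) → ZMod 2) (i : Fin g),
      q (v c i) = c (Sum.inl i) * q (e (Sum.inl i)) + c (Sum.inr i) * q (e (Sum.inr i)) +
        c (Sum.inl i) * c (Sum.inr i) := by
    intro c i
    obtain ⟨h1, _, _⟩ := he i i
    rw [if_pos rfl] at h1
    rw [hv]
    rw [hq, q_smul, q_smul]
    simp only [map_smul, LinearMap.smul_apply, smul_eq_mul, h1, mul_one]
    ring
  have hsplit : ∀ c : (Fin g ⊕ Fin g) → ZMod 2,
      (∑ i : Fin g ⊕ Fin g, c i • e i) = ∑ i : Fin g, v c i := by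
    intro c
    rw [Fintype.sum_sum_type, ← Finset.sum_add_distrib]
  calc
    ∑ c : (Fin g ⊕ Fin g) → ZMod 2, χ (q (∑ i, c i • e i))
        = ∑ c : (Fin g ⊕ Fin g) → ZMod 2, ∏ i : Fin g,
            χ (c (Sum.inl i) * q (e (Sum.inl i)) + c (Sum.inr i) * q (e (Sum.inr i)) +
              c (Sum.inl i) * c (Sum.inr i)) := by
          refine Finset.sum_congr rfl fun c _ => ?_
          rw [hsplit c, q_sum _ _ (fun i _ j _ hij => horth c i j hij), χ_sum]
          exact Finset.prod_congr rfl fun i _ => by rw [qv]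
    _ = ∑ d : Fin g → ZMod 2 × ZMod 2, ∏ i : Fin g,
            χ ((d i).1 * q (e (Sum.inl i)) + (d i).2 * q (e (Sum.inr i)) +
              (d i).1 * (d i).2) := by
          rw [← Equiv.sum_comp (E g)]
          rfl
    _ = ∏ i : Fin g, ∑ p : ZMod 2 × ZMod 2,
            χ (p.1 * q (e (Sum.inl i)) + p.2 * q (e (Sum.inr i)) + p.1 * p.2) := by
          rw [Finset.prod_univ_sum]
          rw [Fintype.piFinset_univ]
    _ = ∏ i : Fin g, 2 * χ (q (e (Sum.inl i)) * q (e (Sum.inr i))) := by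
          exact Finset.prod_congr rfl fun i _ => key_factor _ _
    _ = 2 ^ g * χ (∑ i : Fin g, q (e (Sum.inl i)) * q (e (Sum.inr i))) := by
          rw [Finset.prod_mul_distrib, Finset.prod_const, χ_sum]
          simp

/-- The Arf invariant is independent of the choice of symplectic basis. -/
theorem stmt_3 (V : Type*) [AddCommGroup V] [Module (ZMod 2) V]
    (g : ℕ)
    (B : V →ₗ[ZMod 2] V →ₗ[ZMod 2] ZMod 2)
    (halt : ∀ x, B x x = 0)
    (q : V → ZMod 2)
    (hq : ∀ x y, q (x + y) = q x + q y + B x y)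
    (e e' : Module.Basis (Fin g ⊕ Fin g) (ZMod 2) V)
    (he : ∀ i j : Fin g,
      B (e (Sum.inl i)) (e (Sum.inr j)) = (if i = j then 1 else 0) ∧
      B (e (Sum.inl i)) (e (Sum.inl j)) = 0 ∧
      B (e (Sum.inr i)) (e (Sum.inr j)) = 0)
    (he' : ∀ i j : Fin g,
      B (e' (Sum.inl i)) (e' (Sum.inr j)) = (if i = j then 1 else 0) ∧
      B (e' (Sum.inl i)) (e' (Sum.inl j)) = 0 ∧
      B (e' (Sum.inr i)) (e' (Sum.inr j)) = 0) :
    ∑ i : Fin g, q (e (Sum.inl i)) * q (e (Sum.inr i)) =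
      ∑ i : Fin g, q (e' (Sum.inl i)) * q (e' (Sum.inr i)) := by
  classical
  have h1 := gauss V g B halt q hq e he
  have h2 := gauss V g B halt q hq e' he'
  -- the two Gauss sums are equal, by reindexing coordinates through the change of basis
  have hS : ∑ c : (Fin g ⊕ Fin g) → ZMod 2, χ (q (∑ i, c i • e i)) =
      ∑ c : (Fin g ⊕ Fin g) → ZMod 2, χ (q (∑ i, c i • e' i)) := by
    rw [← Equiv.sum_comp (e.equivFun.symm.trans e'.equivFun).toEquiv
      (fun c => χ (q (∑ i, c i • e' i)))]
    refine Finset.sum_congr rfl fun c _ => ?_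
    have hvec : (∑ i, c i • e i) =
        ∑ i, ((e.equivFun.symm.trans e'.equivFun).toEquiv c) i • e' i := by
      rw [show ((e.equivFun.symm.trans e'.equivFun).toEquiv c) =
            e'.equivFun (e.equivFun.symm c) from rfl,
        ← Module.Basis.equivFun_symm_apply, ← Module.Basis.equivFun_symm_apply,
        LinearEquiv.symm_apply_apply]
    rw [hvec]
  rw [h1, h2] at hS
  have h2g : (2 : ℤ) ^ g ≠ 0 := by positivity
  exact χ_inj (mul_left_cancel₀ h2g hS)
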